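/- Let F = C₁ ∪ ⋯ ∪ C_t be a cycle factor of a digraph D with the minimum possible number t ≥ 2 of cycles. If u is a vertex of C_i and v a vertex of C_j with i ≠ j, then at least one of the arcs u→v⁺ and v→u⁺ is absent from D, where u⁺ denotes the successor of u on its cycle. -/

import Mathlib

/-- Out-neighborhood of `x` in the digraph with arc relation `A`. -/
def outN {V : Type*} (A : V → V → Prop) (x : V) : Set V := {y | A x y}

/-- In-neighborhood of `x` in the digraph with arc relation `A`. -/
def inN {V : Type*} (A : V → V → Prop) (x : V) : Set V := {y | A y x}

/-- `S` is a q-set for the neighborhood function `N`: it has at least two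
vertices and every member shares an `N`-neighbor with another member. -/
def IsQSet {V : Type*} (N : V → Set V) (S : Set V) : Prop :=
  2 ≤ S.ncard ∧ ∀ u ∈ S, ∃ v ∈ S, v ≠ u ∧ (N u ∩ N v).Nonempty

/-- The union of all pairwise common `N`-neighborhoods of distinct members of `S`. -/
def commonUnion {V : Type*} (N : V → Set V) (S : Set V) : Set V :=
  {w | ∃ u ∈ S, ∃ v ∈ S, u ≠ v ∧ w ∈ N u ∧ w ∈ N v}

/-- A digraph is s-quadrangular if every q⁺-set and every q⁻-set `S` has
pairwise common neighborhood union of size at least `|S|`. -/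
def SQuadD {V : Type*} (A : V → V → Prop) : Prop :=
  (∀ S : Set V, IsQSet (outN A) S → S.ncard ≤ (commonUnion (outN A) S).ncard) ∧
  (∀ S : Set V, IsQSet (inN A) S → S.ncard ≤ (commonUnion (inN A) S).ncard)

/-- A digraph is strong if there is a directed path between every ordered pair. -/
def StrongD {V : Type*} (A : V → V → Prop) : Prop :=
  ∀ x y : V, Relation.ReflTransGen A x y

/-- A cycle factor of a loopless digraph, encoded as a fixed-point-free
permutation following the arcs: its cycles are the vertex-disjoint directed
cycles covering all vertices. -/
def IsCycleFactor {V : Type*} (A : V → V → Prop) (σ : Equiv.Perm V) : Prop :=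
  ∀ v, A v (σ v) ∧ σ v ≠ v

/-- Merging two disjoint cycles with a transposition yields a single cycle. -/
lemma merge_isCycle {V : Type*} [Fintype V] [DecidableEq V]
    (c1 c2 : Equiv.Perm V) (hd : c1.Disjoint c2) (h1 : c1.IsCycle) (h2 : c2.IsCycle)
    (u v : V) (hu : c1 u ≠ u) (hv : c2 v ≠ v) :
    Equiv.Perm.IsCycle (c2 * c1 * Equiv.swap u v) := by
  set m := c2 * c1 * Equiv.swap u v with hm
  have hc2u : c2 u = u := (hd u).resolve_left hu
  have hc1v : c1 v = v := (hd v).resolve_right hv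
  have huv : u ≠ v := fun h => hu (by rw [h, hc1v])
  have happ : ∀ x, m x = c2 (c1 (Equiv.swap u v x)) := fun x => rfl
  have hmu : m u = c2 v := by
    rw [happ, Equiv.swap_apply_left, hc1v]
  have hmv : m v = c1 u := by
    have h : c2 (c1 u) = c1 u :=
      (hd (c1 u)).resolve_left (fun h => hu (c1.injective h))
    rw [happ, Equiv.swap_apply_right, h]
  have hstep2 : ∀ x, c2 x ≠ x → x ≠ v → m x = c2 x := by
    intro x hx hxv
    have hxu : x ≠ u := fun h => hx (by rw [h, hc2u])
    have h1x : c1 x = x := (hd x).resolve_right hx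
    rw [happ, Equiv.swap_apply_of_ne_of_ne hxu hxv, h1x]
  have hstep1 : ∀ x, c1 x ≠ x → x ≠ u → m x = c1 x := by
    intro x hx hxu
    have hxv : x ≠ v := fun h => hx (by rw [h, hc1v])
    have h2x : c2 (c1 x) = c1 x :=
      (hd (c1 x)).resolve_left (fun h => hx (c1.injective h))
    rw [happ, Equiv.swap_apply_of_ne_of_ne hxu hxv, h2x]
  have hcomm : ∀ (c : Equiv.Perm V) (k : ℕ) (x : V), c ((c ^ k) x) = (c ^ k) (c x) := by
    intro c k x
    rw [← Equiv.Perm.mul_apply, ← Equiv.Perm.mul_apply, ((Commute.refl c).pow_right k).eq]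
  have horb2 : ∀ k : ℕ, c2 ((c2 ^ k) v) ≠ (c2 ^ k) v := fun k h =>
    hv ((c2 ^ k).injective ((hcomm c2 k v).symm.trans h))
  have horb1 : ∀ k : ℕ, c1 ((c1 ^ k) u) ≠ (c1 ^ k) u := fun k h =>
    hu ((c1 ^ k).injective ((hcomm c1 k u).symm.trans h))
  have claimA : ∀ k : ℕ, m.SameCycle u ((c2 ^ (k + 1)) v) := by
    intro k
    induction k with
    | zero => exact ⟨1, by rw [zpow_one, hmu, pow_one]⟩
    | succ k ih =>
      by_cases hx : (c2 ^ (k + 1)) v = v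
      · refine ⟨1, ?_⟩
        rw [zpow_one, hmu, pow_succ', Equiv.Perm.mul_apply, hx]
      · refine ih.trans ⟨1, ?_⟩
        rw [zpow_one, hstep2 _ (horb2 (k + 1)) hx]
        simp [pow_succ', Equiv.Perm.mul_apply]
  have claimB : ∀ k : ℕ, m.SameCycle v ((c1 ^ (k + 1)) u) := by
    intro k
    induction k with
    | zero => exact ⟨1, by rw [zpow_one, hmv, pow_one]⟩
    | succ k ih =>
      by_cases hx : (c1 ^ (k + 1)) u = u
      · refine ⟨1, ?_⟩
        rw [zpow_one, hmv, pow_succ', Equiv.Perm.mul_apply, hx]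
      · refine ih.trans ⟨1, ?_⟩
        rw [zpow_one, hstep1 _ (horb1 (k + 1)) hx]
        simp [pow_succ', Equiv.Perm.mul_apply]
  have hord2 : 1 ≤ orderOf c2 := orderOf_pos c2
  have hord1 : 1 ≤ orderOf c1 := orderOf_pos c1
  have hsuv : m.SameCycle u v := by
    have := claimA (orderOf c2 - 1)
    rwa [Nat.sub_add_cancel hord2, pow_orderOf_eq_one, Equiv.Perm.one_apply] at this
  refine ⟨u, ?_, ?_⟩
  · rw [hmu]
    intro h
    exact hv (c2.injective (by rw [h, hc2u]))
  · intro y hy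
    have hy' : c1 y ≠ y ∨ c2 y ≠ y := by
      by_contra hcon
      push_neg at hcon
      obtain ⟨a, b⟩ := hcon
      apply hy
      have hyu : y ≠ u := fun h => hu (h ▸ a)
      have hyv : y ≠ v := fun h => hv (h ▸ b)
      rw [happ, Equiv.swap_apply_of_ne_of_ne hyu hyv, a, b]
    rcases hy' with h | h
    · obtain ⟨i, hi⟩ := h1.exists_pow_eq hu h
      have hk : i + orderOf c1 - 1 + 1 = i + orderOf c1 := Nat.sub_add_cancel (le_add_of_le_right hord1)
      refine hsuv.trans ((claimB (i + orderOf c1 - 1)).trans ?_)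
      rw [hk, pow_add, Equiv.Perm.mul_apply, pow_orderOf_eq_one, Equiv.Perm.one_apply, hi]
    · obtain ⟨i, hi⟩ := h2.exists_pow_eq hv h
      have hk : i + orderOf c2 - 1 + 1 = i + orderOf c2 := Nat.sub_add_cancel (le_add_of_le_right hord2)
      refine (claimA (i + orderOf c2 - 1)).trans ?_
      rw [hk, pow_add, Equiv.Perm.mul_apply, pow_orderOf_eq_one, Equiv.Perm.one_apply, hi]


/-- In a cycle factor with the minimum number `t ≥ 2` of cycles, if `u` and `v`
lie on different cycles then the arcs `u → v⁺` and `v → u⁺` are not both present.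
The cycle factor is encoded as a fixed-point-free permutation `σ` following the
arcs, its number of cycles being `σ.cycleType.card` and the successor of `u`
being `σ u`. -/

theorem min_cycle_factor_no_double_arc {V : Type*} [Fintype V] [DecidableEq V]
    (A : V → V → Prop) (hloopless : ∀ v, ¬ A v v)
    (σ : Equiv.Perm V) (hσ : IsCycleFactor A σ)
    (hmin : ∀ τ : Equiv.Perm V, IsCycleFactor A τ →
      Multiset.card σ.cycleType ≤ Multiset.card τ.cycleType)
    (ht : 2 ≤ Multiset.card σ.cycleType)
    (u v : V) (huv : ¬ σ.SameCycle u v) :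
    ¬ (A u (σ v) ∧ A v (σ u)) := by
  rintro ⟨hA1, hA2⟩
  classical
  have hσu : σ u ≠ u := (hσ u).2
  have hσv : σ v ≠ v := (hσ v).2
  set c1 := σ.cycleOf u with hc1
  set c2 := σ.cycleOf v with hc2
  have h1 : c1.IsCycle := σ.isCycle_cycleOf hσu
  have h2 : c2.IsCycle := σ.isCycle_cycleOf hσv
  have hu1 : c1 u ≠ u := by rw [hc1, σ.cycleOf_apply_self]; exact hσu
  have hv2 : c2 v ≠ v := by rw [hc2, σ.cycleOf_apply_self]; exact hσv
  have hd : c1.Disjoint c2 := by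
    intro x
    by_cases h : σ.SameCycle u x
    · exact Or.inr (Equiv.Perm.cycleOf_apply_of_not_sameCycle
        (fun hvx => huv (h.trans hvx.symm)))
    · exact Or.inl (Equiv.Perm.cycleOf_apply_of_not_sameCycle h)
  have hmemc1 : c1 ∈ σ.cycleFactorsFinset :=
    Equiv.Perm.cycleOf_mem_cycleFactorsFinset_iff.mpr (Equiv.Perm.mem_support.mpr hσu)
  set g1 := σ * c1⁻¹ with hg1
  have hdg1 : g1.Disjoint c1 := Equiv.Perm.disjoint_mul_inv_of_mem_cycleFactorsFinset hmemc1
  have hmemc2 : c2 ∈ g1.cycleFactorsFinset := by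
    rw [Equiv.Perm.mem_cycleFactorsFinset_iff]
    refine ⟨h2, fun a ha => ?_⟩
    have hsc : σ.SameCycle v a := (Equiv.Perm.mem_support_cycleOf_iff.mp ha).1
    have hnsc : ¬ σ.SameCycle u a := fun h => huv (h.trans hsc.symm)
    have hfix : c1 a = a := Equiv.Perm.cycleOf_apply_of_not_sameCycle hnsc
    have hfix' : c1⁻¹ a = a := by
      apply c1.injective
      rw [Equiv.Perm.coe_inv, Equiv.apply_symm_apply, hfix]
    rw [hg1, Equiv.Perm.mul_apply, hfix', hc2, hsc.cycleOf_apply]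
  set ρ := g1 * c2⁻¹ with hρ
  have hdρ2 : ρ.Disjoint c2 := Equiv.Perm.disjoint_mul_inv_of_mem_cycleFactorsFinset hmemc2
  have hdρ1 : ρ.Disjoint c1 := by
    intro x
    by_cases hx : c1 x = x
    · exact Or.inr hx
    · left
      have hg1x : g1 x = x := (hdg1 x).resolve_right hx
      have hc2x : c2 x = x := (hd x).resolve_left hx
      have hc2x' : c2⁻¹ x = x := by
        apply c2.injective; rw [Equiv.Perm.coe_inv, Equiv.apply_symm_apply, hc2x]
      rw [hρ, Equiv.Perm.mul_apply, hc2x', hg1x]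
  have hσdecomp : σ = ρ * c2 * c1 := by
    rw [hρ, hg1]
    simp [mul_assoc]
  set m := c2 * c1 * Equiv.swap u v with hmdef
  have hmc : m.IsCycle := merge_isCycle c1 c2 hd h1 h2 u v hu1 hv2
  set τ := σ * Equiv.swap u v with hτ
  have hτdecomp : τ = ρ * m := by
    rw [hτ, hσdecomp, hmdef]
    simp [mul_assoc]
  have hτcf : IsCycleFactor A τ := by
    intro w
    by_cases hw : w = u
    · subst hw
      have happ : τ w = σ v := by rw [hτ, Equiv.Perm.mul_apply, Equiv.swap_apply_left]
      refine ⟨happ ▸ hA1, happ ▸ fun h => ?_⟩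
      exact huv (Equiv.Perm.SameCycle.symm (h ▸ ⟨1, by simp⟩))
    · by_cases hw' : w = v
      · subst hw'
        have happ : τ w = σ u := by rw [hτ, Equiv.Perm.mul_apply, Equiv.swap_apply_right]
        refine ⟨happ ▸ hA2, happ ▸ fun h => ?_⟩
        exact huv (h ▸ ⟨1, by simp⟩)
      · have happ : τ w = σ w := by
          rw [hτ, Equiv.Perm.mul_apply, Equiv.swap_apply_of_ne_of_ne hw hw']
        exact ⟨happ ▸ (hσ w).1, happ ▸ (hσ w).2⟩
  have hdm : ρ.Disjoint m := by
    have hsw : ρ.Disjoint (Equiv.swap u v) := by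
      intro x
      by_cases hx : x = u
      · exact Or.inl (hx ▸ (hdρ1 u).resolve_right hu1)
      · by_cases hx' : x = v
        · exact Or.inl (hx' ▸ (hdρ2 v).resolve_right hv2)
        · exact Or.inr (Equiv.swap_apply_of_ne_of_ne hx hx')
    exact (hdρ2.mul_right hdρ1).mul_right hsw
  have e1 : τ.cycleType = ρ.cycleType + m.cycleType := by
    rw [hτdecomp]; exact hdm.cycleType_mul
  have e2 : σ.cycleType = ρ.cycleType + c2.cycleType + c1.cycleType := by
    rw [hσdecomp, (hdρ1.mul_left hd.symm).cycleType_mul, hdρ2.cycleType_mul]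
  have hcard : Multiset.card τ.cycleType + 1 = Multiset.card σ.cycleType := by
    rw [e1, e2, hmc.cycleType, h1.cycleType, h2.cycleType]
    simp
  have := hmin τ hτcf
  omega
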